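/- Assume (H1)–(H5). Let C > 0, 0 < η < η₀, and 0 < ε ≤ η^{q+1}, and let v ∈ V satisfy I^ε(v) ≤ C. Then there exists a constant c > 0, depending only on C and on the data of W, such that |λ₃^η(v) − z₃₁^{−1}(1 − z₂₁ λ₂^η(v))| ≤ c η. -/

import Mathlib

open MeasureTheory Set Filter

/-- `u ∈ V = H²(0,1) ∩ W^{1,p}₀(0,1)`, represented through its first and second
derivatives `u'`, `u''`: `u(0) = u(1) = 0`, `u` and `u'` are absolutely continuous on
`[0,1]`, `u' ∈ L^p(0,1)` and `u'' ∈ L²(0,1)`. -/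
def MemV (p : ℝ) (u u' u'' : ℝ → ℝ) : Prop :=
  u 0 = 0 ∧ u 1 = 0 ∧
  (∀ x ∈ Set.Icc (0:ℝ) 1, u x = ∫ t in (0:ℝ)..x, u' t) ∧
  (∀ x ∈ Set.Icc (0:ℝ) 1, u' x = u' 0 + ∫ t in (0:ℝ)..x, u'' t) ∧
  IntervalIntegrable u' volume 0 1 ∧
  IntervalIntegrable u'' volume 0 1 ∧
  IntervalIntegrable (fun x => |u' x| ^ p) volume 0 1 ∧
  IntervalIntegrable (fun x => (u'' x) ^ 2) volume 0 1

/-- The rescaled energy `I^ε(u) = ∫₀¹ (ε⁴ u''² + ε⁻² W(u') + ε⁻² u²) dx`. -/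
noncomputable def Ieps (W : ℝ → ℝ) (ε : ℝ) (u u' u'' : ℝ → ℝ) : ℝ :=
  ∫ x in (0:ℝ)..1,
    (ε ^ 4 * (u'' x) ^ 2 + (ε ^ 2)⁻¹ * W (u' x) + (ε ^ 2)⁻¹ * (u x) ^ 2)

/-- Hypotheses (H1)–(H5) on the three–well potential `W`. -/
structure HypW (W : ℝ → ℝ) (p q c₀ c₁ c₂ c₃ η₀ z₁ z₂ z₃ : ℝ) : Prop where
  cont : Continuous W
  nonneg : ∀ s, 0 ≤ W s
  hp : 1 < p
  hc₁ : 0 < c₁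
  hc₂ : 0 < c₂
  hc₃ : 0 < c₃
  lb : ∀ s, c₁ * |s| ^ p - c₂ ≤ W s
  ub : ∀ s, W s ≤ c₃ * (|s| ^ p + 1)
  hz₁ : z₁ < 0
  hz₂ : 0 < z₂
  hz₂₃ : z₂ < z₃
  zeroSet : ∀ s, W s = 0 ↔ (s = z₁ ∨ s = z₂ ∨ s = z₃)
  hη₀pos : 0 < η₀
  hη₀lt : η₀ < min 1 (min (-z₁) (min z₂ ((z₃ - z₂) / 2)))
  hc₀ : 0 < c₀
  hq : 0 < q
  coer : ∀ s,
    c₀ * min (min (|s - z₁| ^ q) (min (|s - z₂| ^ q) (|s - z₃| ^ q))) (η₀ ^ q) ≤ W s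

/-- The volume fraction `λ^η(v)` at the well `z`:
the Lebesgue measure of `{x ∈ (0,1) : |v'(x) − z| ≤ η}`. -/
noncomputable def lamEta (v' : ℝ → ℝ) (z η : ℝ) : ℝ :=
  (volume {x : ℝ | x ∈ Set.Ioo (0:ℝ) 1 ∧ |v' x - z| ≤ η}).toReal

/-- `E₀`-type constant: `2∫_{a}^{b} √(W(s)) ds`. -/
noncomputable def cE (W : ℝ → ℝ) (a b : ℝ) : ℝ := 2 * ∫ s in a..b, Real.sqrt (W s)

/-- The constant `A₀ = (3/2)^{2/3} E₀^{2/3} (z₂² z₂₁)^{1/3}`. -/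
noncomputable def cA₀ (W : ℝ → ℝ) (z₁ z₂ : ℝ) : ℝ :=
  (3/2 : ℝ) ^ ((2:ℝ)/3) * (cE W z₁ z₂) ^ ((2:ℝ)/3) * (z₂ ^ 2 * (1 - z₂ / z₁)) ^ ((1:ℝ)/3)

/-- The constant `B₀ = (3/2)^{2/3} (E₀+E₁)^{2/3} (z₃² z₃₁)^{1/3}`. -/
noncomputable def cB₀ (W : ℝ → ℝ) (z₁ z₂ z₃ : ℝ) : ℝ :=
  (3/2 : ℝ) ^ ((2:ℝ)/3) * (cE W z₁ z₂ + cE W z₂ z₃) ^ ((2:ℝ)/3) *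
    (z₃ ^ 2 * (1 - z₃ / z₁)) ^ ((1:ℝ)/3)

set_option maxHeartbeats 2000000 in
/-- Relation between the volume fractions of low-energy states:
`|λ₃^η(v) − z₃₁⁻¹ (1 − z₂₁ λ₂^η(v))| ≤ c η`. -/
theorem statement13
    (W : ℝ → ℝ) (p q c₀ c₁ c₂ c₃ η₀ z₁ z₂ z₃ : ℝ)
    (hW : HypW W p q c₀ c₁ c₂ c₃ η₀ z₁ z₂ z₃)
    (C : ℝ) (hC : 0 < C) :
    ∃ c : ℝ, 0 < c ∧
      ∀ η ε : ℝ, ∀ v v' v'' : ℝ → ℝ,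
        0 < η → η < η₀ → 0 < ε → ε ≤ η ^ (q + 1) →
        MemV p v v' v'' → Ieps W ε v v' v'' ≤ C →
        |lamEta v' z₃ η - (1 - z₃ / z₁)⁻¹ * (1 - (1 - z₂ / z₁) * lamEta v' z₂ η)|
          ≤ c * η := by
  obtain ⟨hcont, hWnn, hp, hc₁, hc₂, hc₃, hlb, hub, hz₁, hz₂, hz₂₃, hzero, hη₀pos, hη₀lt,
    hc₀, hq, hcoer⟩ := hW
  simp only [lt_min_iff] at hη₀lt
  obtain ⟨hη₀1, hη₀z₁, hη₀z₂, hη₀z₂₃⟩ := hη₀lt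
  have hz13 : z₁ < z₃ := hz₁.trans (hz₂.trans hz₂₃)
  set M₀ : ℝ := (2 * c₂ / c₁) ^ (1/p : ℝ) with hM₀def
  have hM₀ : 0 < M₀ := Real.rpow_pos_of_pos (by positivity) _
  have hM₀p1 : 0 < M₀ ^ (p - 1) := Real.rpow_pos_of_pos hM₀ _
  set c₄ : ℝ := 2 / (c₁ * M₀ ^ (p - 1)) with hc₄def
  have hc₄ : 0 < c₄ := by positivity
  set K' : ℝ := M₀ * (C / c₀) + c₄ * C with hK'def
  have hK' : 0 < K' := by positivity
  clear_value K'
  have hnum : 0 < 3 + K' + (-z₁) * (C / c₀) := by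
    have := mul_pos (neg_pos.mpr hz₁) (div_pos hC hc₀)
    linarith
  refine ⟨(3 + K' + (-z₁) * (C / c₀)) / (z₃ - z₁), div_pos hnum (by linarith), ?_⟩
  intro η ε v v' v'' hη hηη₀ hε hεη hV hI
  obtain ⟨hv0, hv1, hvFTC, hv'FTC, hv'int, hv''int, hv'pint, hv''2int⟩ := hV
  have hη1 : η < 1 := hηη₀.trans hη₀1
  have hε1 : ε ≤ η := by
    calc ε ≤ η ^ (q+1) := hεη
    _ ≤ η ^ (1:ℝ) := Real.rpow_le_rpow_of_exponent_ge hη hη1.le (by linarith)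
    _ = η := Real.rpow_one η
  -- continuous representatives of v' and v on [0,1]
  set g : ℝ → ℝ := fun x => v' 0 + ∫ t in (0:ℝ)..x, v'' t with hgdef
  set P : ℝ → ℝ := fun x => ∫ t in (0:ℝ)..x, v' t with hPdef
  have hgcont : ContinuousOn g (Icc 0 1) := by
    have h1 : ContinuousOn (fun b => ∫ x in (0:ℝ)..b, v'' x) (uIcc (0:ℝ) 1) :=
      intervalIntegral.continuousOn_primitive_interval' hv''int left_mem_uIcc
    rw [uIcc_of_le zero_le_one] at h1
    exact continuousOn_const.add h1
  have hPcont : ContinuousOn P (Icc 0 1) := by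
    have h1 : ContinuousOn (fun b => ∫ x in (0:ℝ)..b, v' x) (uIcc (0:ℝ) 1) :=
      intervalIntegral.continuousOn_primitive_interval' hv'int left_mem_uIcc
    rwa [uIcc_of_le zero_le_one] at h1
  have hv'g : ∀ x ∈ Icc (0:ℝ) 1, v' x = g x := hv'FTC
  have hvP : ∀ x ∈ Icc (0:ℝ) 1, v x = P x := hvFTC
  -- integrability facts
  have hv'Ioc : IntegrableOn v' (Ioc 0 1) volume :=
    (intervalIntegrable_iff_integrableOn_Ioc_of_le zero_le_one).mp hv'int
  have hv'Ioo : IntegrableOn v' (Ioo 0 1) volume := IntegrableOn.mono_set hv'Ioc Ioo_subset_Ioc_self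
  have hv''2Ioc : IntegrableOn (fun x => (v'' x)^2) (Ioc 0 1) volume :=
    (intervalIntegrable_iff_integrableOn_Ioc_of_le zero_le_one).mp hv''2int
  have hv'pIoc : IntegrableOn (fun x => |v' x| ^ p) (Ioc 0 1) volume :=
    (intervalIntegrable_iff_integrableOn_Ioc_of_le zero_le_one).mp hv'pint
  have hWmeas : AEStronglyMeasurable (fun x => W (v' x)) (volume.restrict (Ioc 0 1)) := by
    have h1 : ContinuousOn (fun x => W (g x)) (Icc 0 1) := hcont.comp_continuousOn hgcont
    have h2 : AEStronglyMeasurable (fun x => W (g x)) (volume.restrict (Icc (0:ℝ) 1)) :=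
      h1.aestronglyMeasurable measurableSet_Icc
    have h3 : AEStronglyMeasurable (fun x => W (g x)) (volume.restrict (Ioc (0:ℝ) 1)) :=
      h2.mono_measure (Measure.restrict_mono Ioc_subset_Icc_self le_rfl)
    refine h3.congr ?_
    filter_upwards [ae_restrict_mem measurableSet_Ioc] with x hx
    rw [hv'g x (Ioc_subset_Icc_self hx)]
  have hWIoc : IntegrableOn (fun x => W (v' x)) (Ioc 0 1) volume := by
    refine Integrable.mono' (g := fun x => c₃ * (|v' x| ^ p + 1))
      ((hv'pIoc.add (integrableOn_const measure_Ioc_lt_top.ne)).const_mul c₃)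
      hWmeas ?_
    refine Eventually.of_forall fun x => ?_
    rw [Real.norm_eq_abs, abs_of_nonneg (hWnn _)]
    exact hub _
  have hWIoo : IntegrableOn (fun x => W (v' x)) (Ioo 0 1) volume :=
    IntegrableOn.mono_set hWIoc Ioo_subset_Ioc_self
  have hv2Ioc : IntegrableOn (fun x => (v x)^2) (Ioc 0 1) volume := by
    obtain ⟨M, hM⟩ := isCompact_Icc.exists_bound_of_continuousOn hPcont
    have hmeas : AEStronglyMeasurable (fun x => (v x)^2) (volume.restrict (Ioc 0 1)) := by
      have h1 : ContinuousOn (fun x => (P x)^2) (Icc 0 1) := hPcont.pow 2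
      have h1' : AEStronglyMeasurable (fun x => (P x)^2) (volume.restrict (Icc (0:ℝ) 1)) :=
        h1.aestronglyMeasurable measurableSet_Icc
      have h2 : AEStronglyMeasurable (fun x => (P x)^2) (volume.restrict (Ioc (0:ℝ) 1)) :=
        h1'.mono_measure (Measure.restrict_mono Ioc_subset_Icc_self le_rfl)
      refine h2.congr ?_
      filter_upwards [ae_restrict_mem measurableSet_Ioc] with x hx
      rw [hvP x (Ioc_subset_Icc_self hx)]
    refine Integrable.mono' (integrable_const (M^2))  hmeas ?_
    filter_upwards [ae_restrict_mem measurableSet_Ioc] with x hx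
    have hx' : x ∈ Icc (0:ℝ) 1 := Ioc_subset_Icc_self hx
    have hPM := hM x hx'
    rw [Real.norm_eq_abs] at hPM
    rw [Real.norm_eq_abs, hvP x hx', abs_of_nonneg (sq_nonneg _)]
    calc (P x)^2 = |P x|^2 := (sq_abs _).symm
    _ ≤ M^2 := pow_le_pow_left₀ (abs_nonneg _) hPM 2
  -- energy pieces
  have hε2 : (0:ℝ) < ε^2 := by positivity
  have hWenergy : ∫ x in Ioo (0:ℝ) 1, W (v' x) ≤ C * ε^2 := by
    have hIeq : Ieps W ε v v' v'' =
        (∫ x in Ioo (0:ℝ) 1, ε^4 * (v'' x)^2) + ((∫ x in Ioo (0:ℝ) 1, (ε^2)⁻¹ * W (v' x))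
          + (∫ x in Ioo (0:ℝ) 1, (ε^2)⁻¹ * (v x)^2)) := by
      have hf1 : IntegrableOn (fun x => ε^4 * (v'' x)^2) (Ioo 0 1) volume :=
        IntegrableOn.mono_set (hv''2Ioc.const_mul _) Ioo_subset_Ioc_self
      have hf2 : IntegrableOn (fun x => (ε^2)⁻¹ * W (v' x)) (Ioo 0 1) volume :=
        IntegrableOn.mono_set (hWIoc.const_mul _) Ioo_subset_Ioc_self
      have hf3 : IntegrableOn (fun x => (ε^2)⁻¹ * (v x)^2) (Ioo 0 1) volume :=
        IntegrableOn.mono_set (hv2Ioc.const_mul _) Ioo_subset_Ioc_self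
      have hf12 : IntegrableOn (fun x => ε^4 * (v'' x)^2 + (ε^2)⁻¹ * W (v' x)) (Ioo 0 1)
          volume := hf1.add hf2
      rw [Ieps, intervalIntegral.integral_of_le zero_le_one, integral_Ioc_eq_integral_Ioo]
      rw [integral_add hf12 hf3, integral_add hf1 hf2]
      ring
    have h1 : 0 ≤ ∫ x in Ioo (0:ℝ) 1, ε^4 * (v'' x)^2 :=
      integral_nonneg fun x => by positivity
    have h3 : 0 ≤ ∫ x in Ioo (0:ℝ) 1, (ε^2)⁻¹ * (v x)^2 :=
      integral_nonneg fun x => by positivity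
    have h2 : ∫ x in Ioo (0:ℝ) 1, (ε^2)⁻¹ * W (v' x)
        = (ε^2)⁻¹ * ∫ x in Ioo (0:ℝ) 1, W (v' x) := integral_const_mul _ _
    have hle : (ε^2)⁻¹ * (∫ x in Ioo (0:ℝ) 1, W (v' x)) ≤ C := by
      rw [← h2]; rw [hIeq] at hI; linarith
    calc ∫ x in Ioo (0:ℝ) 1, W (v' x)
        = ε^2 * ((ε^2)⁻¹ * ∫ x in Ioo (0:ℝ) 1, W (v' x)) := by
          field_simp
    _ ≤ ε^2 * C := by
          exact mul_le_mul_of_nonneg_left hle hε2.le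
    _ = C * ε^2 := mul_comm _ _
  -- the sets
  set A : ℝ → Set ℝ := fun z => {x : ℝ | x ∈ Set.Ioo (0:ℝ) 1 ∧ |v' x - z| ≤ η} with hAdef
  set Bs : Set ℝ := Ioo 0 1 \ (A z₁ ∪ A z₂ ∪ A z₃) with hBdef
  have hAsub : ∀ z, A z ⊆ Ioo 0 1 := fun z x hx => hx.1
  have hAmeas : ∀ z, MeasurableSet (A z) := by
    intro z
    have heq : A z = Ioo 0 1 ∩ (Icc 0 1 ∩ g ⁻¹' (Icc (z - η) (z + η))) := by
      ext x
      simp only [hAdef, mem_setOf_eq, mem_inter_iff, mem_preimage, mem_Icc, mem_Ioo]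
      constructor
      · rintro ⟨hx, habs⟩
        rw [abs_le] at habs
        have hgx : v' x = g x := hv'g x ⟨hx.1.le, hx.2.le⟩
        rw [hgx] at habs
        exact ⟨hx, ⟨hx.1.le, hx.2.le⟩, by constructor <;> linarith [habs.1, habs.2]⟩
      · rintro ⟨hx, hx', hgx⟩
        have hgx' : v' x = g x := hv'g x hx'
        refine ⟨hx, ?_⟩
        rw [hgx', abs_le]
        exact ⟨by linarith [hgx.1], by linarith [hgx.2]⟩
    rw [heq]
    exact measurableSet_Ioo.inter
      ((hgcont.preimage_isClosed_of_isClosed isClosed_Icc isClosed_Icc).measurableSet)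
  have hBmeas : MeasurableSet Bs :=
    measurableSet_Ioo.diff (((hAmeas z₁).union (hAmeas z₂)).union (hAmeas z₃))
  -- measures
  have hSvol : volume (Ioo (0:ℝ) 1) = 1 := by simp
  have hAfin : ∀ z, volume (A z) ≠ ⊤ := by
    intro z
    exact ne_top_of_le_ne_top (by simp [hSvol]) (measure_mono (hAsub z))
  have hBfin : volume Bs ≠ ⊤ :=
    ne_top_of_le_ne_top (by simp [hSvol]) (measure_mono diff_subset)
  set ℓ₁ : ℝ := (volume (A z₁)).toReal with hl1
  set ℓ₂ : ℝ := (volume (A z₂)).toReal with hl2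
  set ℓ₃ : ℝ := (volume (A z₃)).toReal with hl3
  set b : ℝ := (volume Bs).toReal with hbdef
  have hl1nn : 0 ≤ ℓ₁ := ENNReal.toReal_nonneg
  have hl2nn : 0 ≤ ℓ₂ := ENNReal.toReal_nonneg
  have hl3nn : 0 ≤ ℓ₃ := ENNReal.toReal_nonneg
  have hbnn : 0 ≤ b := ENNReal.toReal_nonneg
  have hlle1 : ∀ z, (volume (A z)).toReal ≤ 1 := by
    intro z
    have hmono : volume (A z) ≤ volume (Ioo (0:ℝ) 1) := measure_mono (hAsub z)
    rw [hSvol] at hmono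
    simpa using ENNReal.toReal_mono (by simp) hmono
  -- disjointness
  have hpair : ∀ a c : ℝ, 2*η < c - a → Disjoint (A a) (A c) := by
    intro a c hac
    rw [Set.disjoint_left]
    rintro x ⟨hx, ha⟩ ⟨_, hc⟩
    rw [abs_le] at ha hc
    linarith [ha.1, ha.2, hc.1, hc.2]
  have hd12 : Disjoint (A z₁) (A z₂) := hpair _ _ (by linarith)
  have hd13 : Disjoint (A z₁) (A z₃) := hpair _ _ (by linarith)
  have hd23 : Disjoint (A z₂) (A z₃) := hpair _ _ (by linarith)
  -- measure additivity
  have hUvol : volume (A z₁ ∪ A z₂ ∪ A z₃) = volume (A z₁) + volume (A z₂) + volume (A z₃) := by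
    rw [measure_union (hd13.union_left hd23) (hAmeas z₃), measure_union hd12 (hAmeas z₂)]
  have hUB : (A z₁ ∪ A z₂ ∪ A z₃) ∪ Bs = Ioo 0 1 := by
    rw [hBdef]
    exact union_diff_cancel (union_subset (union_subset (hAsub z₁) (hAsub z₂)) (hAsub z₃))
  have htotal : volume (A z₁) + volume (A z₂) + volume (A z₃) + volume Bs = 1 := by
    rw [← hUvol, ← measure_union disjoint_sdiff_right hBmeas, hUB, hSvol]
  have hsumR : ℓ₁ + ℓ₂ + ℓ₃ + b = 1 := by
    have h := congrArg ENNReal.toReal htotal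
    rw [ENNReal.toReal_add (ENNReal.add_ne_top.mpr ⟨ENNReal.add_ne_top.mpr ⟨hAfin z₁, hAfin z₂⟩, hAfin z₃⟩) hBfin,
      ENNReal.toReal_add (ENNReal.add_ne_top.mpr ⟨hAfin z₁, hAfin z₂⟩) (hAfin z₃),
      ENNReal.toReal_add (hAfin z₁) (hAfin z₂)] at h
    simpa using h
  -- lower bound for W on the bad set
  have hrpow_le : η ^ q ≤ η₀ ^ q := Real.rpow_le_rpow hη.le hηη₀.le hq.le
  have hWB : ∀ x ∈ Bs, c₀ * η ^ q ≤ W (v' x) := by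
    intro x hx
    obtain ⟨hxS, hxn⟩ := hx
    simp only [mem_union, hAdef, mem_setOf_eq, not_or] at hxn
    obtain ⟨⟨h1, h2⟩, h3⟩ := hxn
    have e1 : η < |v' x - z₁| := by by_contra h; exact h1 ⟨hxS, not_lt.mp h⟩
    have e2 : η < |v' x - z₂| := by by_contra h; exact h2 ⟨hxS, not_lt.mp h⟩
    have e3 : η < |v' x - z₃| := by by_contra h; exact h3 ⟨hxS, not_lt.mp h⟩
    have f1 : η ^ q ≤ |v' x - z₁| ^ q := Real.rpow_le_rpow hη.le e1.le hq.le
    have f2 : η ^ q ≤ |v' x - z₂| ^ q := Real.rpow_le_rpow hη.le e2.le hq.le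
    have f3 : η ^ q ≤ |v' x - z₃| ^ q := Real.rpow_le_rpow hη.le e3.le hq.le
    calc c₀ * η ^ q
        ≤ c₀ * min (min (|v' x - z₁| ^ q) (min (|v' x - z₂| ^ q) (|v' x - z₃| ^ q))) (η₀ ^ q) :=
          mul_le_mul_of_nonneg_left (le_min (le_min f1 (le_min f2 f3)) hrpow_le) hc₀.le
    _ ≤ W (v' x) := hcoer _
  have hWBsint : IntegrableOn (fun x => W (v' x)) Bs volume := IntegrableOn.mono_set hWIoo diff_subset
  have hWBle : ∫ x in Bs, W (v' x) ≤ C * ε^2 := by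
    refine le_trans (setIntegral_mono_set hWIoo (Eventually.of_forall fun x => hWnn _)
      (HasSubset.Subset.eventuallyLE diff_subset)) hWenergy
  have hbineq : c₀ * η ^ q * b ≤ C * ε ^ 2 :=
    le_trans (setIntegral_ge_of_const_le_real hBmeas hBfin hWB hWBsint) hWBle
  have hηq : (0:ℝ) < η ^ q := Real.rpow_pos_of_pos hη _
  have hεsq : ε ^ 2 ≤ η ^ q * η := by
    have e1 : (η:ℝ) ^ (q+1) * η ^ (q+1) = η ^ q * η ^ (q+2) := by
      rw [← Real.rpow_add hη, ← Real.rpow_add hη]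
      ring_nf
    have e2 : (η:ℝ) ^ (q+2) ≤ η := by
      calc (η:ℝ) ^ (q+2) ≤ η ^ (1:ℝ) :=
            Real.rpow_le_rpow_of_exponent_ge hη hη1.le (by linarith)
      _ = η := Real.rpow_one η
    calc ε ^ 2 = ε * ε := sq ε
    _ ≤ η ^ (q+1) * η ^ (q+1) := mul_self_le_mul_self hε.le hεη
    _ = η ^ q * η ^ (q+2) := e1
    _ ≤ η ^ q * η := mul_le_mul_of_nonneg_left e2 hηq.le
  have hb1 : b ≤ C / c₀ * η := by
    have key : c₀ * η ^ q * b ≤ C * (η ^ q * η) :=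
      hbineq.trans (mul_le_mul_of_nonneg_left hεsq hC.le)
    have h : (b * c₀) * η ^ q ≤ (C * η) * η ^ q := by linarith only [key]
    have h2 : b * c₀ ≤ C * η := le_of_mul_le_mul_right h hηq
    rw [div_mul_eq_mul_div, le_div_iff₀ hc₀]
    linarith
  -- the total integral of v' vanishes
  have hint0 : ∫ x in Ioo (0:ℝ) 1, v' x = 0 := by
    have h1 := hvFTC 1 (by norm_num)
    rw [intervalIntegral.integral_of_le zero_le_one, integral_Ioc_eq_integral_Ioo] at h1
    rw [← h1, hv1]
  -- per-well estimates
  have hAest : ∀ z, |(∫ x in A z, v' x) - z * (volume (A z)).toReal|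
      ≤ η * (volume (A z)).toReal := by
    intro z
    have hint : IntegrableOn v' (A z) volume := IntegrableOn.mono_set hv'Ioo (hAsub z)
    have heq : (∫ x in A z, v' x) - z * (volume (A z)).toReal
        = ∫ x in A z, (v' x - z) := by
      rw [integral_sub hint (integrableOn_const (hAfin z))]
      rw [setIntegral_const, smul_eq_mul, mul_comm]; rfl
    rw [heq]
    have := norm_setIntegral_le_of_norm_le_const (μ := volume) (s := A z) (C := η)
      (f := fun x => v' x - z) (lt_of_le_of_ne le_top (hAfin z))
      (fun x hx => by simpa [Real.norm_eq_abs] using hx.2)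
    rw [Real.norm_eq_abs, measureReal_def] at this
    linarith [this]
  -- pointwise bound |s| ≤ M₀ + c₄ W s
  have hpne : p ≠ 0 := by positivity
  have hM₀pow : M₀ ^ p = 2*c₂/c₁ := by
    rw [hM₀def, ← Real.rpow_mul (by positivity), one_div, inv_mul_cancel₀ hpne, Real.rpow_one]
  have hpt : ∀ s : ℝ, |s| ≤ M₀ + c₄ * W s := by
    intro s
    rcases le_or_gt |s| M₀ with h | h
    · linarith only [h, mul_nonneg hc₄.le (hWnn s), hM₀]
    · have hsp : 0 < |s| := hM₀.trans h
      have key1 : |s| ^ p = |s| * |s| ^ (p-1) := by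
        rw [show |s| * |s| ^ (p-1) = |s| ^ (1:ℝ) * |s| ^ (p-1) by rw [Real.rpow_one],
          ← Real.rpow_add hsp]
        congr 1
        ring
      have key2 : M₀ ^ (p-1) ≤ |s| ^ (p-1) := Real.rpow_le_rpow hM₀.le h.le (by linarith)
      have key3 : M₀ ^ p ≤ |s| ^ p := Real.rpow_le_rpow hM₀.le h.le (by linarith)
      have hW1 : c₁/2 * (M₀^(p-1) * |s|) ≤ W s := by
        have h1 := hlb s
        have h3 : M₀^(p-1) * |s| ≤ |s| ^ p := by
          rw [key1]
          calc M₀^(p-1) * |s| ≤ |s|^(p-1) * |s| :=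
                mul_le_mul_of_nonneg_right key2 (abs_nonneg s)
          _ = |s| * |s|^(p-1) := mul_comm _ _
        have hc₂M : c₁/2 * M₀ ^ p = c₂ := by rw [hM₀pow]; field_simp
        have step1 : c₁/2 * (M₀^(p-1) * |s|) ≤ c₁/2 * |s|^p :=
          mul_le_mul_of_nonneg_left h3 (by positivity)
        have step2 : c₁/2 * M₀^p ≤ c₁/2 * |s|^p :=
          mul_le_mul_of_nonneg_left key3 (by positivity)
        linarith only [h1, step1, step2, hc₂M]
      have hch : c₄ * (c₁/2 * (M₀^(p-1) * |s|)) = |s| := by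
        rw [hc₄def]; field_simp
      linarith only [hch, mul_le_mul_of_nonneg_left hW1 hc₄.le, hM₀]
  -- estimate on the bad set
  have hBest : |∫ x in Bs, v' x| ≤ M₀ * b + c₄ * (C * ε^2) := by
    have hv'Bs : IntegrableOn v' Bs volume := IntegrableOn.mono_set hv'Ioo diff_subset
    have h1 : |∫ x in Bs, v' x| ≤ ∫ x in Bs, |v' x| := by
      simpa [Real.norm_eq_abs] using
        norm_integral_le_integral_norm (μ := volume.restrict Bs) v'
    have h2 : ∫ x in Bs, |v' x| ≤ ∫ x in Bs, (M₀ + c₄ * W (v' x)) := by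
      refine setIntegral_mono_on hv'Bs.abs ?_ hBmeas (fun x _ => hpt (v' x))
      exact (integrableOn_const hBfin).add
        (hWBsint.const_mul c₄)
    have h3 : ∫ x in Bs, (M₀ + c₄ * W (v' x))
        = M₀ * b + c₄ * ∫ x in Bs, W (v' x) := by
      rw [integral_add (integrableOn_const (C := M₀) hBfin)
        (hWBsint.const_mul c₄), setIntegral_const, smul_eq_mul, integral_const_mul, mul_comm]; rfl
    have h4 : c₄ * ∫ x in Bs, W (v' x) ≤ c₄ * (C * ε^2) :=
      mul_le_mul_of_nonneg_left hWBle hc₄.le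
    linarith
  -- splitting the integral
  have hsplit : (∫ x in A z₁, v' x) + (∫ x in A z₂, v' x) + (∫ x in A z₃, v' x)
      + (∫ x in Bs, v' x) = 0 := by
    have hIA : ∀ z, IntegrableOn v' (A z) volume := fun z => IntegrableOn.mono_set hv'Ioo (hAsub z)
    have hIB : IntegrableOn v' Bs volume := IntegrableOn.mono_set hv'Ioo diff_subset
    have e1 : ∫ x in A z₁ ∪ A z₂, v' x = (∫ x in A z₁, v' x) + ∫ x in A z₂, v' x :=
      setIntegral_union hd12 (hAmeas z₂) (hIA z₁) (hIA z₂)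
    have e2 : ∫ x in (A z₁ ∪ A z₂) ∪ A z₃, v' x
        = (∫ x in A z₁ ∪ A z₂, v' x) + ∫ x in A z₃, v' x :=
      setIntegral_union (hd13.union_left hd23) (hAmeas z₃)
        ((hIA z₁).union (hIA z₂)) (hIA z₃)
    have e3 : ∫ x in ((A z₁ ∪ A z₂) ∪ A z₃) ∪ Bs, v' x
        = (∫ x in (A z₁ ∪ A z₂) ∪ A z₃, v' x) + ∫ x in Bs, v' x :=
      setIntegral_union disjoint_sdiff_right hBmeas
        (((hIA z₁).union (hIA z₂)).union (hIA z₃)) hIB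
    rw [hUB] at e3
    rw [hint0] at e3
    rw [e2, e1] at e3
    linarith
  -- assemble everything
  have hl1le : ℓ₁ ≤ 1 := hlle1 z₁
  have hl2le : ℓ₂ ≤ 1 := hlle1 z₂
  have hl3le : ℓ₃ ≤ 1 := hlle1 z₃
  have hE1 : |(∫ x in A z₁, v' x) - z₁ * ℓ₁| ≤ η := by
    refine (hAest z₁).trans ?_
    calc η * ℓ₁ ≤ η * 1 := mul_le_mul_of_nonneg_left hl1le hη.le
    _ = η := mul_one η
  have hE2 : |(∫ x in A z₂, v' x) - z₂ * ℓ₂| ≤ η := by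
    refine (hAest z₂).trans ?_
    calc η * ℓ₂ ≤ η * 1 := mul_le_mul_of_nonneg_left hl2le hη.le
    _ = η := mul_one η
  have hE3 : |(∫ x in A z₃, v' x) - z₃ * ℓ₃| ≤ η := by
    refine (hAest z₃).trans ?_
    calc η * ℓ₃ ≤ η * 1 := mul_le_mul_of_nonneg_left hl3le hη.le
    _ = η := mul_one η
  have hBest2 : |∫ x in Bs, v' x| ≤ K' * η := by
    have h1 : M₀ * b ≤ M₀ * (C / c₀ * η) := mul_le_mul_of_nonneg_left hb1 hM₀.le
    have h2 : ε^2 ≤ η := by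
      calc ε^2 = ε * ε := sq ε
      _ ≤ η * η := mul_self_le_mul_self hε.le hε1
      _ ≤ 1 * η := mul_le_mul_of_nonneg_right hη1.le hη.le
      _ = η := one_mul η
    have h3 : c₄ * (C * ε^2) ≤ c₄ * (C * η) :=
      mul_le_mul_of_nonneg_left (mul_le_mul_of_nonneg_left h2 hC.le) hc₄.le
    rw [hK'def]
    calc |∫ x in Bs, v' x| ≤ M₀ * b + c₄ * (C * ε^2) := hBest
    _ ≤ M₀ * (C / c₀ * η) + c₄ * (C * η) := by linarith
    _ = (M₀ * (C / c₀) + c₄ * C) * η := by ring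
  -- main linear-combination estimate
  have hb2' : z₁ * (C / c₀ * η) ≤ z₁ * b := mul_le_mul_of_nonpos_left hb1 hz₁.le
  have hbz : z₁ * b ≤ 0 := mul_nonpos_of_nonpos_of_nonneg hz₁.le hbnn
  have hpos2 : 0 ≤ (-z₁) * (C / c₀) * η :=
    mul_nonneg (mul_nonneg (neg_nonneg.mpr hz₁.le) (div_pos hC hc₀).le) hη.le
  have hz1sum : z₁ * ℓ₁ + z₁ * ℓ₂ + z₁ * ℓ₃ + z₁ * b = z₁ := by
    linear_combination z₁ * hsumR
  have hEmain : |z₁ + (z₂ - z₁) * ℓ₂ + (z₃ - z₁) * ℓ₃|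
      ≤ (3 + K' + (-z₁) * (C / c₀)) * η := by
    rw [abs_le] at hE1 hE2 hE3 hBest2 ⊢
    constructor
    · linarith only [hE1.2, hE2.2, hE3.2, hBest2.2, hsplit, hz1sum, hb2', hbz, hpos2]
    · linarith only [hE1.1, hE2.1, hE3.1, hBest2.1, hsplit, hz1sum, hb2', hbz, hpos2]
  -- final algebra
  have hz₁0 : z₁ ≠ 0 := ne_of_lt hz₁
  have hzd : (1 - z₃/z₁) ≠ 0 := by
    rw [sub_ne_zero]
    intro h
    rw [eq_div_iff hz₁0] at h
    simp at h
    linarith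
  have hlam2 : lamEta v' z₂ η = ℓ₂ := rfl
  have hlam3 : lamEta v' z₃ η = ℓ₃ := rfl
  rw [hlam2, hlam3]
  have hz13' : z₁ - z₃ ≠ 0 := by intro h; exact absurd (by linarith : z₁ = z₃) (ne_of_lt hz13)
  have hkey : (z₃ - z₁) * (ℓ₃ - (1 - z₃/z₁)⁻¹ * (1 - (1 - z₂/z₁) * ℓ₂))
      = z₁ + (z₂ - z₁) * ℓ₂ + (z₃ - z₁) * ℓ₃ := by
    have hinv : (1 - z₃/z₁)⁻¹ = z₁ / (z₁ - z₃) := by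
      rw [show (1 : ℝ) - z₃/z₁ = (z₁ - z₃)/z₁ by field_simp, inv_div]
    rw [hinv]
    field_simp
    ring
  have hz31 : (0:ℝ) < z₃ - z₁ := by linarith
  have habs : |ℓ₃ - (1 - z₃/z₁)⁻¹ * (1 - (1 - z₂/z₁) * ℓ₂)|
      = |z₁ + (z₂ - z₁) * ℓ₂ + (z₃ - z₁) * ℓ₃| / (z₃ - z₁) := by
    rw [← hkey, abs_mul, abs_of_pos hz31]
    field_simp
  rw [habs, div_le_iff₀ hz31]
  calc |z₁ + (z₂ - z₁) * ℓ₂ + (z₃ - z₁) * ℓ₃| ≤ (3 + K' + (-z₁) * (C / c₀)) * η := hEmain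
  _ = (3 + K' + (-z₁) * (C / c₀)) / (z₃ - z₁) * η * (z₃ - z₁) := by field_simp
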